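/- Let k be a field and φ : k[x,y,z,w] → k[t,z] the k-algebra homomorphism with x ↦ t², y ↦ t³, z ↦ z, w ↦ tz. Then the kernel of φ is the ideal generated by y² − x³, yz − xw, w² − xz², and x²z − yw. -/
import Mathlib

open MvPolynomial

noncomputable section StmtAux

lemma poly_parity {S : Type*} [CommRing S] (p q : Polynomial S)
    (h : Polynomial.expand S 2 p + Polynomial.X * Polynomial.expand S 2 q = 0) :
    p = 0 ∧ q = 0 := by
  constructor <;> ext n
  · have h2 := congrArg (fun r => r.coeff (2 * n)) h
    rcases Nat.eq_zero_or_pos n with rfl | hn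
    · simpa [Polynomial.coeff_expand] using h2
    · have e : 2 * n = (2 * n - 1) + 1 := by omega
      rw [e] at h2
      simp only [Polynomial.coeff_add, Polynomial.coeff_X_mul,
        Polynomial.coeff_expand (by norm_num : 0 < 2), Polynomial.coeff_zero] at h2
      rw [if_pos (by omega : 2 ∣ 2 * n - 1 + 1),
        if_neg (by omega : ¬ 2 ∣ 2 * n - 1)] at h2
      rw [(by omega : (2 * n - 1 + 1) / 2 = n)] at h2
      simpa using h2
  · have h2 := congrArg (fun r => r.coeff (2 * n + 1)) h
    simp only [Polynomial.coeff_add, Polynomial.coeff_X_mul,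
      Polynomial.coeff_expand (by norm_num : 0 < 2), Polynomial.coeff_zero] at h2
    rw [if_neg (by omega : ¬ 2 ∣ 2 * n + 1),
      if_pos (by omega : 2 ∣ 2 * n)] at h2
    rw [(by omega : (2 * n) / 2 = n)] at h2
    simpa using h2

variable {k : Type*} [CommRing k]

/-- t ↦ t², z ↦ z -/
def Dbl : MvPolynomial (Fin 2) k →ₐ[k] MvPolynomial (Fin 2) k := aeval ![X 0 ^ 2, X 1]

lemma Dbl_parity (P Q : MvPolynomial (Fin 2) k)
    (h : Dbl P + X 0 * Dbl Q = 0) : P = 0 ∧ Q = 0 := by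
  set e := finSuccEquiv k 1 with he
  have key : ∀ P : MvPolynomial (Fin 2) k,
      e (Dbl P) = Polynomial.expand (MvPolynomial (Fin 1) k) 2 (e P) := by
    have hcomp : (e.toAlgHom.comp Dbl : MvPolynomial (Fin 2) k →ₐ[k] _) =
        ((Polynomial.expand (MvPolynomial (Fin 1) k) 2).restrictScalars k).comp
          e.toAlgHom := by
      apply MvPolynomial.algHom_ext
      intro i
      fin_cases i
      · simp [Dbl, he, finSuccEquiv_X_zero]
      · have h1 : (X 1 : MvPolynomial (Fin 2) k) = X (Fin.succ 0) := rfl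
        simp [Dbl, he, h1, finSuccEquiv_X_succ]
    intro P
    exact congrArg (fun f => f P) hcomp
  have h2 : Polynomial.expand (MvPolynomial (Fin 1) k) 2 (e P) +
      Polynomial.X * Polynomial.expand (MvPolynomial (Fin 1) k) 2 (e Q) = 0 := by
    have := congrArg e h
    rw [map_add, map_mul, key P, key Q, map_zero] at this
    rw [← this, he, finSuccEquiv_X_zero]
  obtain ⟨h3, h4⟩ := poly_parity _ _ h2
  exact ⟨e.injective (by rw [h3, map_zero]), e.injective (by rw [h4, map_zero])⟩

/-- x ↦ x, z ↦ z  (k[x,z] → k[x,y,z,w]) -/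
def emb : MvPolynomial (Fin 2) k →ₐ[k] MvPolynomial (Fin 4) k := aeval ![X 0, X 2]

@[simp] lemma emb_X0 : emb (X 0 : MvPolynomial (Fin 2) k) = X 0 := by simp [emb]
@[simp] lemma emb_X1 : emb (X 1 : MvPolynomial (Fin 2) k) = X 2 := by simp [emb]
@[simp] lemma emb_jx (B : Polynomial k) :
    emb (Polynomial.aeval (X 0 : MvPolynomial (Fin 2) k) B) =
      Polynomial.aeval (X 0 : MvPolynomial (Fin 4) k) B := by
  rw [← Polynomial.aeval_algHom_apply, emb_X0]

/-- splitting off the z-free part -/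
lemma split (A : MvPolynomial (Fin 2) k) :
    ∃ (A0 : Polynomial k) (A1 : MvPolynomial (Fin 2) k),
      A = Polynomial.aeval (X 0) A0 + X 1 * A1 := by
  induction A using MvPolynomial.induction_on with
  | C a => exact ⟨Polynomial.C a, 0, by simp⟩
  | add p q hp hq =>
    obtain ⟨p0, p1, rfl⟩ := hp
    obtain ⟨q0, q1, rfl⟩ := hq
    exact ⟨p0 + q0, p1 + q1, by rw [map_add]; ring⟩
  | mul_X p i hp =>
    obtain ⟨p0, p1, rfl⟩ := hp
    fin_cases i
    · show ∃ A0 A1, (Polynomial.aeval (X 0) p0 + X 1 * p1) * X 0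
          = Polynomial.aeval (X 0) A0 + X 1 * A1
      exact ⟨p0 * Polynomial.X, p1 * X 0, by rw [map_mul, Polynomial.aeval_X]; ring⟩
    · show ∃ A0 A1, (Polynomial.aeval (X 0) p0 + X 1 * p1) * X 1
          = Polynomial.aeval (X 0) A0 + X 1 * A1
      exact ⟨0, Polynomial.aeval (X 0) p0 + X 1 * p1, by rw [map_zero]; ring⟩

def Igen (k : Type*) [CommRing k] : Ideal (MvPolynomial (Fin 4) k) :=
  Ideal.span {(X 1)^2 - (X 0)^3, (X 1) * (X 2) - (X 0) * (X 3),
    (X 3)^2 - (X 0) * (X 2)^2, (X 0)^2 * (X 2) - (X 1) * (X 3)}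

lemma r1_mem : (X 1)^2 - (X 0)^3 ∈ Igen k := Ideal.subset_span (by simp)
lemma r2_mem : (X 1) * (X 2) - (X 0) * (X 3) ∈ Igen k := Ideal.subset_span (by simp)
lemma r3_mem : (X 3)^2 - (X 0) * (X 2)^2 ∈ Igen k := Ideal.subset_span (by simp)
lemma r4_mem : (X 0)^2 * (X 2) - (X 1) * (X 3) ∈ Igen k := Ideal.subset_span (by simp)

lemma reduce (f : MvPolynomial (Fin 4) k) :
    ∃ (A C : MvPolynomial (Fin 2) k) (B : Polynomial k),
      f - (emb A + X 1 * Polynomial.aeval (X 0) B + X 3 * emb C) ∈ Igen k := by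
  induction f using MvPolynomial.induction_on with
  | C a =>
    refine ⟨MvPolynomial.C a, 0, 0, ?_⟩
    have : (MvPolynomial.C a : MvPolynomial (Fin 4) k) -
        (emb (MvPolynomial.C a) + X 1 * Polynomial.aeval (X 0) (0 : Polynomial k)
          + X 3 * emb 0) = 0 := by
      simp [emb]
    rw [this]; exact (Igen k).zero_mem
  | add p q hp hq =>
    obtain ⟨Ap, Cp, Bp, hp⟩ := hp
    obtain ⟨Aq, Cq, Bq, hq⟩ := hq
    refine ⟨Ap + Aq, Cp + Cq, Bp + Bq, ?_⟩
    have := Ideal.add_mem _ hp hq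
    convert this using 1
    simp only [map_add]
    ring
  | mul_X p i hp =>
    obtain ⟨A, Cp, B, hp⟩ := hp
    fin_cases i
    · -- multiply by x
      show ∃ A C : MvPolynomial (Fin 2) k, ∃ B : Polynomial k,
        p * X 0 - (emb A + X 1 * Polynomial.aeval (X 0) B + X 3 * emb C) ∈ Igen k
      refine ⟨X 0 * A, X 0 * Cp, Polynomial.X * B, ?_⟩
      have key : p * X 0 - (emb (X 0 * A) + X 1 * Polynomial.aeval (X 0) (Polynomial.X * B)
            + X 3 * emb (X 0 * Cp)) =
          (p - (emb A + X 1 * Polynomial.aeval (X 0) B + X 3 * emb Cp)) * X 0 := by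
        simp only [map_mul, emb_X0, Polynomial.aeval_X]
        ring
      rw [key]
      exact Ideal.mul_mem_right _ _ hp
    · -- multiply by y
      show ∃ A C : MvPolynomial (Fin 2) k, ∃ B : Polynomial k,
        p * X 1 - (emb A + X 1 * Polynomial.aeval (X 0) B + X 3 * emb C) ∈ Igen k
      obtain ⟨A0, A1, rfl⟩ := split A
      refine ⟨X 0 ^ 3 * Polynomial.aeval (X 0) B + X 0 ^ 2 * X 1 * Cp, X 0 * A1, A0, ?_⟩
      have key : p * X 1 -
          (emb (X 0 ^ 3 * Polynomial.aeval (X 0) B + X 0 ^ 2 * X 1 * Cp)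
            + X 1 * Polynomial.aeval (X 0) A0 + X 3 * emb (X 0 * A1)) =
          (p - (emb (Polynomial.aeval (X 0) A0 + X 1 * A1)
            + X 1 * Polynomial.aeval (X 0) B + X 3 * emb Cp)) * X 1
          + (Polynomial.aeval (X 0 : MvPolynomial (Fin 4) k) B * ((X 1)^2 - (X 0)^3)
            + emb A1 * ((X 1) * (X 2) - (X 0) * (X 3))
            - emb Cp * ((X 0)^2 * (X 2) - (X 1) * (X 3))) := by
        simp only [map_mul, map_add, map_pow, emb_X0, emb_X1, emb_jx, Polynomial.aeval_X]
        ring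
      rw [key]
      refine Ideal.add_mem _ (Ideal.mul_mem_right _ _ hp) ?_
      exact Ideal.sub_mem _
        (Ideal.add_mem _ (Ideal.mul_mem_left _ _ r1_mem) (Ideal.mul_mem_left _ _ r2_mem))
        (Ideal.mul_mem_left _ _ r4_mem)
    · -- multiply by z
      show ∃ A C : MvPolynomial (Fin 2) k, ∃ B : Polynomial k,
        p * X 2 - (emb A + X 1 * Polynomial.aeval (X 0) B + X 3 * emb C) ∈ Igen k
      refine ⟨X 1 * A, X 0 * Polynomial.aeval (X 0) B + X 1 * Cp, 0, ?_⟩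
      have key : p * X 2 -
          (emb (X 1 * A) + X 1 * Polynomial.aeval (X 0) (0 : Polynomial k)
            + X 3 * emb (X 0 * Polynomial.aeval (X 0) B + X 1 * Cp)) =
          (p - (emb A + X 1 * Polynomial.aeval (X 0) B + X 3 * emb Cp)) * X 2
          + Polynomial.aeval (X 0 : MvPolynomial (Fin 4) k) B *
              ((X 1) * (X 2) - (X 0) * (X 3)) := by
        simp only [map_mul, map_add, map_zero, emb_X0, emb_X1, emb_jx, Polynomial.aeval_X]
        ring
      rw [key]
      exact Ideal.add_mem _ (Ideal.mul_mem_right _ _ hp) (Ideal.mul_mem_left _ _ r2_mem)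
    · -- multiply by w
      show ∃ A C : MvPolynomial (Fin 2) k, ∃ B : Polynomial k,
        p * X 3 - (emb A + X 1 * Polynomial.aeval (X 0) B + X 3 * emb C) ∈ Igen k
      refine ⟨X 0 ^ 2 * X 1 * Polynomial.aeval (X 0) B + X 0 * X 1 ^ 2 * Cp, A, 0, ?_⟩
      have key : p * X 3 -
          (emb (X 0 ^ 2 * X 1 * Polynomial.aeval (X 0) B + X 0 * X 1 ^ 2 * Cp)
            + X 1 * Polynomial.aeval (X 0) (0 : Polynomial k) + X 3 * emb A) =
          (p - (emb A + X 1 * Polynomial.aeval (X 0) B + X 3 * emb Cp)) * X 3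
          + (emb Cp * ((X 3)^2 - (X 0) * (X 2)^2)
            - Polynomial.aeval (X 0 : MvPolynomial (Fin 4) k) B *
                ((X 0)^2 * (X 2) - (X 1) * (X 3))) := by
        simp only [map_mul, map_add, map_zero, map_pow, emb_X0, emb_X1, emb_jx,
          Polynomial.aeval_X]
        ring
      rw [key]
      refine Ideal.add_mem _ (Ideal.mul_mem_right _ _ hp) ?_
      exact Ideal.sub_mem _ (Ideal.mul_mem_left _ _ r3_mem) (Ideal.mul_mem_left _ _ r4_mem)

end StmtAux

theorem stmt_1 (k : Type*) [Field k] :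
    let φ : MvPolynomial (Fin 4) k →ₐ[k] MvPolynomial (Fin 2) k :=
      aeval ![(X 0)^2, (X 0)^3, X 1, (X 0) * (X 1)]
    RingHom.ker φ.toRingHom =
      Ideal.span {(X 1)^2 - (X 0)^3, (X 1) * (X 2) - (X 0) * (X 3),
        (X 3)^2 - (X 0) * (X 2)^2, (X 0)^2 * (X 2) - (X 1) * (X 3)} := by
  intro φ
  have hspan : Ideal.span {((X 1)^2 - (X 0)^3 : MvPolynomial (Fin 4) k),
      (X 1) * (X 2) - (X 0) * (X 3),
      (X 3)^2 - (X 0) * (X 2)^2, (X 0)^2 * (X 2) - (X 1) * (X 3)} = Igen k := rfl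
  rw [hspan]
  have hle : Igen k ≤ RingHom.ker φ.toRingHom := by
    rw [Igen, Ideal.span_le]
    rintro r hr
    simp only [Set.mem_insert_iff, Set.mem_singleton_iff] at hr
    rcases hr with rfl | rfl | rfl | rfl <;>
    · show φ _ = 0
      simp only [φ, map_sub, map_mul, map_pow, aeval_X, Matrix.cons_val_zero,
        Matrix.cons_val_one, Matrix.head_cons, Matrix.cons_val_two, Matrix.tail_cons,
        Matrix.cons_val_three, Matrix.head_fin_const]
      ring
  refine le_antisymm ?_ hle
  intro f hf
  obtain ⟨A, Cf, B, hm⟩ := reduce f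
  have hφG : φ (emb A + X 1 * Polynomial.aeval (X 0) B + X 3 * emb Cf) = 0 := by
    have h1 : φ f = 0 := hf
    have h2 : φ (f - (emb A + X 1 * Polynomial.aeval (X 0) B + X 3 * emb Cf)) = 0 := hle hm
    rw [map_sub, h1, zero_sub, neg_eq_zero] at h2
    exact h2
  have hemb : ∀ P : MvPolynomial (Fin 2) k, φ (emb P) = Dbl P := by
    have : (φ.comp emb : MvPolynomial (Fin 2) k →ₐ[k] MvPolynomial (Fin 2) k) = Dbl := by
      apply MvPolynomial.algHom_ext
      intro i
      fin_cases i <;> simp [φ, emb, Dbl]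
    exact fun P => congrArg (fun ψ => ψ P) this
  have hφB : φ (Polynomial.aeval (X 0) B) =
      Polynomial.aeval ((X 0 : MvPolynomial (Fin 2) k) ^ 2) B := by
    rw [← Polynomial.aeval_algHom_apply]
    congr 1
    simp [φ]
  have hDjx : Dbl (Polynomial.aeval (X 0) B) =
      Polynomial.aeval ((X 0 : MvPolynomial (Fin 2) k) ^ 2) B := by
    rw [← Polynomial.aeval_algHom_apply]
    congr 1
    simp [Dbl]
  have hkey : Dbl A + X 0 * Dbl (X 0 * Polynomial.aeval (X 0) B + X 1 * Cf) = 0 := by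
    rw [← hφG]
    simp only [map_add, map_mul, hemb, hφB, hDjx, aeval_X]
    simp only [φ, Dbl, aeval_X, Matrix.cons_val_zero, Matrix.cons_val_one,
      Matrix.head_cons, Matrix.cons_val_two, Matrix.tail_cons, Matrix.cons_val_three,
      Matrix.head_fin_const, Matrix.vecHead, Matrix.vecTail, Function.comp_apply,
      Matrix.cons_val_succ, Fin.succ_zero_eq_one, Fin.succ_one_eq_two]
    ring
  obtain ⟨hA, hBC⟩ := Dbl_parity _ _ hkey
  -- evaluate z ↦ 0 to get B = 0
  have hB : B = 0 := by
    have h3 := congrArg (aeval (R := k) ![X 0, (0 : MvPolynomial (Fin 2) k)]) hBC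
    rw [map_zero] at h3
    simp only [map_add, map_mul, aeval_X, Matrix.cons_val_zero, Matrix.cons_val_one,
      Matrix.head_cons, zero_mul, add_zero] at h3
    rw [← Polynomial.aeval_algHom_apply] at h3
    simp only [aeval_X, Matrix.cons_val_zero] at h3
    have hX0 : (X 0 : MvPolynomial (Fin 2) k) ≠ 0 := MvPolynomial.X_ne_zero 0
    have h4 : Polynomial.aeval (X 0 : MvPolynomial (Fin 2) k) B = 0 :=
      (mul_eq_zero.mp h3).resolve_left hX0
    have h5 := congrArg (aeval (R := k) ![Polynomial.X, (0 : Polynomial k)]) h4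
    rw [← Polynomial.aeval_algHom_apply, map_zero] at h5
    simpa using h5
  have hC : Cf = 0 := by
    rw [hB, map_zero, mul_zero, zero_add] at hBC
    exact (mul_eq_zero.mp hBC).resolve_left (MvPolynomial.X_ne_zero 1)
  rw [hA, hB, hC] at hm
  simpa using hm
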